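/- For all natural numbers a, b ≥ 1 with (a,b) ≠ (1,1), gcd(a,b) = (((−2^(ab(ab+a+b))) mod ((2^(a²b) − 1)(2^(ab²) − 1))) mod 2^(ab)) − 2, where the computation is carried out in the integers and x mod y denotes the unique representative in [0, y) for y > 0. -/

import Mathlib

open Finset

private lemma add_three_le_two_pow (n : ℕ) (hn : 3 ≤ n) : n + 3 ≤ 2 ^ n := by
  induction n with
  | zero => omega
  | succ m ih =>
    rcases Nat.lt_or_ge m 3 with h | h
    · interval_cases m <;> omega
    · have h2 := ih h
      have h3 : 2 ^ (m + 1) = 2 * 2 ^ m := by ring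
      omega

private lemma pow_emod_dvd (x : ℤ) (b c : ℕ) : (x ^ b - 1) ∣ x ^ c - x ^ (c % b) := by
  have h1 : x ^ c = (x ^ b) ^ (c / b) * x ^ (c % b) := by
    rw [← pow_mul, ← pow_add, Nat.div_add_mod]
  have h2 : (x ^ b - 1) ∣ (x ^ b) ^ (c / b) - 1 := by
    simpa using sub_dvd_pow_sub_pow (x ^ b) 1 (c / b)
  obtain ⟨k, hk⟩ := h2
  exact ⟨k * x ^ (c % b), by rw [h1]; linear_combination x ^ (c % b) * hk⟩

private lemma sum_periodic_blocks (f : ℕ → ℤ) (p : ℕ) (hf : ∀ k, f (k + p) = f k) (q : ℕ) :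
    ∑ k ∈ range (q * p), f k = q * ∑ t ∈ range p, f t := by
  have hshift : ∀ m k, f (m * p + k) = f k := by
    intro m
    induction m with
    | zero => simp
    | succ j ihj =>
      intro k
      have h : (j + 1) * p + k = j * p + k + p := by ring
      rw [h, hf, ihj]
  induction q with
  | zero => simp
  | succ m ih =>
    have h : (m + 1) * p = m * p + p := by ring
    rw [h, Finset.sum_range_add, ih, Finset.sum_congr rfl fun k _ => hshift m k]
    push_cast
    ring

private lemma sum_mul_mod (f : ℕ → ℤ) (n c : ℕ) (hn : 0 < n) (hc : Nat.Coprime c n) :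
    ∑ t ∈ range n, f (c * t % n) = ∑ m ∈ range n, f m := by
  rcases eq_or_lt_of_le (show 1 ≤ n from hn) with h1 | h1
  · rw [← h1]
    simp
  · obtain ⟨d, -, hd⟩ := Nat.exists_mul_mod_eq_one_of_coprime hc h1
    have key : ∀ u v t : ℕ, u * v % n = 1 → t < n → u * (v * t % n) % n = t := by
      intro u v t huv ht
      have h2 : u * (v * t % n) ≡ u * (v * t) [MOD n] :=
        Nat.ModEq.mul_left u (Nat.mod_modEq _ n)
      have h4 : u * v * t ≡ 1 * t [MOD n] := by
        refine Nat.ModEq.mul_right t ?_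
        show u * v % n = 1 % n
        rw [huv, Nat.mod_eq_of_lt h1]
      have h5 : u * (v * t % n) ≡ t [MOD n] := by
        calc u * (v * t % n) ≡ u * (v * t) [MOD n] := h2
          _ = u * v * t := by ring
          _ ≡ 1 * t [MOD n] := h4
          _ = t := by ring
      have h6 : u * (v * t % n) % n = t % n := h5
      rwa [Nat.mod_eq_of_lt ht] at h6
    refine Finset.sum_nbij' (fun t => c * t % n) (fun m => d * m % n) ?_ ?_ ?_ ?_ ?_
    · intro t _; exact Finset.mem_range.mpr (Nat.mod_lt _ hn)
    · intro m _; exact Finset.mem_range.mpr (Nat.mod_lt _ hn)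
    · intro t ht
      exact key d c t (by rwa [Nat.mul_comm d c]) (Finset.mem_range.mp ht)
    · intro m hm
      exact key c d m hd (Finset.mem_range.mp hm)
    · intro t _; rfl

set_option maxHeartbeats 1000000 in
private lemma main_gcd_lemma (a b : ℕ) (ha : 1 ≤ a) (hb : 1 ≤ b) (h3 : 3 ≤ a * b) :
    (Nat.gcd a b : ℤ) =
      ((-(2 : ℤ) ^ (a * b * (a * b + a + b)))
          % (((2 : ℤ) ^ (a ^ 2 * b) - 1) * ((2 : ℤ) ^ (a * b ^ 2) - 1)))
        % (2 : ℤ) ^ (a * b) - 2 := by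
  set g := Nat.gcd a b with hgdef
  set x : ℤ := 2 ^ (a * b) with hx
  clear_value x
  have hXa : (2 : ℤ) ^ (a ^ 2 * b) = x ^ a := by
    rw [hx, ← pow_mul]; congr 1; ring
  have hXb : (2 : ℤ) ^ (a * b ^ 2) = x ^ b := by
    rw [hx, ← pow_mul]; congr 1; ring
  have hN : (2 : ℤ) ^ (a * b * (a * b + a + b)) = x ^ (a * b + a + b) := by
    rw [hx, ← pow_mul]
  rw [hXa, hXb, hN]
  -- basic facts
  have hg0 : 0 < g := Nat.gcd_pos_of_pos_left b ha
  have hga : g ∣ a := Nat.gcd_dvd_left a b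
  have hgb : g ∣ b := Nat.gcd_dvd_right a b
  set a' := a / g with ha'def
  set b' := b / g with hb'def
  clear_value a' b'
  have ha'g : g * a' = a := by rw [ha'def]; exact Nat.mul_div_cancel' hga
  have hb'g : g * b' = b := by rw [hb'def]; exact Nat.mul_div_cancel' hgb
  have hcop : Nat.Coprime a' b' := by
    rw [ha'def, hb'def, hgdef]; exact Nat.coprime_div_gcd_div_gcd hg0
  have hb'0 : 0 < b' := by
    rcases Nat.eq_zero_or_pos b' with h | h
    · rw [h, Nat.mul_zero] at hb'g; omega
    · exact h
  have hx8 : (8 : ℤ) ≤ x := by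
    rw [hx]
    calc (8 : ℤ) = 2 ^ 3 := by norm_num
    _ ≤ 2 ^ (a * b) := by
        apply pow_le_pow_right₀ <;> omega
  have hx0 : (0 : ℤ) < x := by linarith
  have hX8 : (8 : ℤ) ≤ x ^ a := le_trans hx8 (le_self_pow₀ (by linarith) (by omega))
  have hY8 : (8 : ℤ) ≤ x ^ b := le_trans hx8 (le_self_pow₀ (by linarith) (by omega))
  set S : ℤ := ∑ m ∈ range b', x ^ (g * m) with hSdef
  set v : ℤ := (g : ℤ) * S with hvdef
  clear_value S v
  have hS0 : (0 : ℤ) ≤ S := by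
    rw [hSdef]
    apply Finset.sum_nonneg
    intro i _
    positivity
  have hv0 : (0 : ℤ) ≤ v := by
    rw [hvdef]; exact mul_nonneg (by positivity) hS0
  have hgeomv : (x ^ g - 1) * S = x ^ b - 1 := by
    rw [hSdef]
    have h := geom_sum_mul (x ^ g) b'
    simp only [← pow_mul] at h
    rw [hb'g] at h
    rw [mul_comm] at h
    exact h
  -- step 1: divisibility B | u * x^(a+b) - w
  set u : ℤ := ∑ k ∈ range b, x ^ (a * k) with hudef
  clear_value u
  have hdvd1 : (x ^ b - 1) ∣ u * x ^ (a + b) - ∑ k ∈ range b, x ^ (a * (k + 1) % b) := by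
    rw [hudef, Finset.sum_mul, ← Finset.sum_sub_distrib]
    apply Finset.dvd_sum
    intro k _
    have he : x ^ (a * k) * x ^ (a + b) = x ^ (a * (k + 1) + b) := by
      rw [← pow_add]; congr 1; ring
    rw [he]
    have := pow_emod_dvd x b (a * (k + 1) + b)
    rwa [Nat.add_mod_right] at this
  -- step 2: shift
  have hshift : ∑ k ∈ range b, x ^ (a * (k + 1) % b) = ∑ k ∈ range b, x ^ (a * k % b) := by
    have h1 := Finset.sum_range_succ' (fun k => x ^ (a * k % b)) b
    have h2 := Finset.sum_range_succ (fun k => x ^ (a * k % b)) b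
    have h3 : (fun k => x ^ (a * k % b)) b = (fun k => x ^ (a * k % b)) 0 := by
      simp [Nat.mul_mod_left]
    simp only at h1 h2 h3
    linarith [h1, h2]
  -- step 3: periodicity
  have hper : ∑ k ∈ range b, x ^ (a * k % b) = (g : ℤ) * ∑ t ∈ range b', x ^ (a * t % b) := by
    have hab' : a * b' = a' * b := by rw [← ha'g, ← hb'g]; ring
    have hperiodic : ∀ k, (fun k => x ^ (a * k % b)) (k + b') = (fun k => x ^ (a * k % b)) k := by
      intro k
      simp only
      congr 1
      rw [Nat.mul_add, hab', Nat.add_mul_mod_self_right]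
    have := sum_periodic_blocks (fun k => x ^ (a * k % b)) b' hperiodic g
    rw [hb'g] at this
    exact this
  -- step 4: bijection
  have hbij : ∑ t ∈ range b', x ^ (a * t % b) = S := by
    have hmm : ∀ t, a * t % b = g * (a' * t % b') := by
      intro t
      conv_lhs => rw [← ha'g, ← hb'g, mul_assoc, Nat.mul_mod_mul_left]
    simp only [hmm]
    rw [hSdef]
    exact sum_mul_mod (fun m => x ^ (g * m)) b' a' hb'0 hcop
  have hw : ∑ k ∈ range b, x ^ (a * (k + 1) % b) = v := by
    rw [hshift, hper, hbij, hvdef]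
  -- main divisibility
  have hu : u * (x ^ a - 1) = x ^ (a * b) - 1 := by
    rw [hudef]
    have h := geom_sum_mul (x ^ a) b
    simp only [← pow_mul] at h
    exact h
  have hD : ((x ^ a - 1) * (x ^ b - 1)) ∣
      x ^ (a * b + a + b) - (x ^ (a + b) + (x ^ a - 1) * v) := by
    obtain ⟨k, hk⟩ := hdvd1
    rw [hw] at hk
    refine ⟨k, ?_⟩
    have e1 : x ^ (a * b + a + b) = x ^ (a * b) * (x ^ a * x ^ b) := by
      rw [← pow_add, ← pow_add]; congr 1; ring
    have e2 : x ^ (a + b) = x ^ a * x ^ b := by rw [← pow_add]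
    rw [e1, e2]
    rw [e2] at hk
    linear_combination (x ^ a - 1) * hk - (x ^ a * x ^ b) * hu
  -- inequalities
  have h2g : 2 * (g : ℤ) ≤ x - 1 := by
    have key : 2 * g + 1 ≤ 2 ^ (a * b) := by
      rcases Nat.lt_or_ge a 2 with hc | hc
      · have hga1 : g = 1 := by
          have : a = 1 := by omega
          rw [hgdef, this, Nat.gcd_one_left]
        rw [hga1]
        calc 2 * 1 + 1 ≤ 2 ^ 3 := by norm_num
        _ ≤ 2 ^ (a * b) := Nat.pow_le_pow_right (by norm_num) h3
      · rcases Nat.lt_or_ge b 2 with hd | hd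
        · have hgb1 : g = 1 := by
            have : b = 1 := by omega
            rw [hgdef, this, Nat.gcd_one_right]
          rw [hgb1]
          calc 2 * 1 + 1 ≤ 2 ^ 3 := by norm_num
          _ ≤ 2 ^ (a * b) := Nat.pow_le_pow_right (by norm_num) h3
        · have hgle_a : g ≤ a := Nat.le_of_dvd (by omega) hga
          have hgle_b : g ≤ b := Nat.le_of_dvd (by omega) hgb
          have hsum : a + b ≤ a * b := by nlinarith
          have := Nat.lt_two_pow_self (n := a * b)
          omega
    have : ((2 * g + 1 : ℕ) : ℤ) ≤ ((2 ^ (a * b) : ℕ) : ℤ) := Int.ofNat_le.mpr key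
    push_cast at this
    rw [hx]
    push_cast
    linarith
  have hvB : 2 * v ≤ x ^ b - 1 := by
    have hxg1 : x ≤ x ^ g := le_self_pow₀ (by linarith) (by omega)
    have c1 : 2 * v * (x - 1) ≤ 2 * v * (x ^ g - 1) := by
      apply mul_le_mul_of_nonneg_left (by linarith) (by linarith)
    have c2 : 2 * v * (x ^ g - 1) = 2 * (g : ℤ) * (x ^ b - 1) := by
      rw [hvdef]
      linear_combination 2 * (g : ℤ) * hgeomv
    have c3 : 2 * (g : ℤ) * (x ^ b - 1) ≤ (x - 1) * (x ^ b - 1) := by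
      apply mul_le_mul_of_nonneg_right h2g (by linarith)
    have c4 : 2 * v * (x - 1) ≤ (x ^ b - 1) * (x - 1) := by
      rw [mul_comm (x ^ b - 1) (x - 1)]; linarith
    exact le_of_mul_le_mul_right c4 (by linarith)
  have hsAB : (x ^ a - 1) * v + x ^ a + x ^ b - 1 ≤ (x ^ a - 1) * (x ^ b - 1) := by
    have c1 : (x ^ a - 1) * (2 * v) ≤ (x ^ a - 1) * (x ^ b - 1) :=
      mul_le_mul_of_nonneg_left hvB (by linarith)
    have c2 : 2 * (x ^ a + x ^ b - 1) ≤ (x ^ a - 1) * (x ^ b - 1) := by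
      have hp : 0 ≤ (x ^ a - 8) * (x ^ b - 8) :=
        mul_nonneg (by linarith) (by linarith)
      have hp' : (x ^ a - 8) * (x ^ b - 8) = x ^ a * x ^ b - 8 * x ^ a - 8 * x ^ b + 64 := by ring
      have hq : (x ^ a - 1) * (x ^ b - 1) = x ^ a * x ^ b - x ^ a - x ^ b + 1 := by ring
      linarith
    linarith
  -- the remainder
  set r : ℤ := (x ^ a - 1) * (x ^ b - 1) - ((x ^ a - 1) * v + x ^ a + x ^ b - 1) with hrdef
  clear_value r
  have hr0 : 0 ≤ r := by rw [hrdef]; linarith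
  have hrlt : r < (x ^ a - 1) * (x ^ b - 1) := by
    rw [hrdef]
    have : 0 ≤ (x ^ a - 1) * v := mul_nonneg (by linarith) hv0
    linarith
  have hABpos : (0 : ℤ) < (x ^ a - 1) * (x ^ b - 1) :=
    mul_pos (by linarith) (by linarith)
  have hmod1 : (-(x ^ (a * b + a + b))) % ((x ^ a - 1) * (x ^ b - 1)) = r := by
    have hcong : -(x ^ (a * b + a + b)) ≡ r [ZMOD (x ^ a - 1) * (x ^ b - 1)] := by
      apply Int.modEq_iff_dvd.mpr
      have : r - -(x ^ (a * b + a + b)) =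
          (x ^ (a * b + a + b) - (x ^ (a + b) + (x ^ a - 1) * v)) +
          ((x ^ a - 1) * (x ^ b - 1)) * 2 := by
        rw [hrdef]
        have e2 : x ^ (a + b) = x ^ a * x ^ b := by rw [← pow_add]
        rw [e2]
        ring
      rw [this]
      exact dvd_add hD (Dvd.intro 2 rfl)
    have h1 : (-(x ^ (a * b + a + b))) % ((x ^ a - 1) * (x ^ b - 1)) =
        r % ((x ^ a - 1) * (x ^ b - 1)) := hcong
    rw [h1, Int.emod_eq_of_lt hr0 hrlt]
  rw [hmod1]
  -- now r % x = g + 2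
  have hgx : (g : ℤ) + 2 < x := by
    have hga' : g ≤ a := Nat.le_of_dvd (by omega) hga
    have h1 : a ≤ a * b := Nat.le_mul_of_pos_right a hb
    have h2 : a * b + 3 ≤ 2 ^ (a * b) := add_three_le_two_pow (a * b) h3
    have key : g + 2 < 2 ^ (a * b) := by omega
    have : ((g + 2 : ℕ) : ℤ) < ((2 ^ (a * b) : ℕ) : ℤ) := Int.ofNat_lt.mpr key
    push_cast at this
    rw [hx]
    push_cast
    linarith
  have hxdvd : x ∣ r - ((g : ℤ) + 2) := by
    obtain ⟨b'', hb''⟩ : ∃ n, b' = n + 1 := ⟨b' - 1, by omega⟩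
    have hvg : x ∣ v - (g : ℤ) := by
      have hsplit : S = ∑ m ∈ range b'', x ^ (g * (m + 1)) + 1 := by
        rw [hSdef, hb'', Finset.sum_range_succ']
        simp
      have hdv : x ∣ ∑ m ∈ range b'', x ^ (g * (m + 1)) := by
        apply Finset.dvd_sum
        intro m _
        exact dvd_pow_self x (by positivity)
      have : v - (g : ℤ) = (g : ℤ) * ∑ m ∈ range b'', x ^ (g * (m + 1)) := by
        rw [hvdef, hsplit]
        ring
      rw [this]
      exact Dvd.dvd.mul_left hdv _
    have hxa : x ∣ x ^ a := dvd_pow_self x (by omega)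
    have hxb : x ∣ x ^ b := dvd_pow_self x (by omega)
    have : r - ((g : ℤ) + 2) =
        x ^ a * (x ^ b - 2 - v) - 2 * x ^ b + (v - (g : ℤ)) := by
      rw [hrdef]
      ring
    rw [this]
    exact dvd_add (dvd_sub (hxa.mul_right _) (hxb.mul_left 2)) hvg
  have hmod2 : r % x = (g : ℤ) + 2 := by
    have hcong : r ≡ (g : ℤ) + 2 [ZMOD x] := by
      apply Int.modEq_iff_dvd.mpr
      have : (g : ℤ) + 2 - r = -(r - ((g : ℤ) + 2)) := by ring
      rw [this]
      exact dvd_neg.mpr hxdvd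
    have h1 : r % x = ((g : ℤ) + 2) % x := hcong
    rw [h1, Int.emod_eq_of_lt (by positivity) hgx]
  rw [hmod2]
  ring

theorem gcd_mod_mod_base2 (a b : ℕ) (ha : 1 ≤ a) (hb : 1 ≤ b) (hab : (a, b) ≠ (1, 1)) :
    (Nat.gcd a b : ℤ) =
      ((-(2 : ℤ) ^ (a * b * (a * b + a + b)))
          % (((2 : ℤ) ^ (a ^ 2 * b) - 1) * ((2 : ℤ) ^ (a * b ^ 2) - 1)))
        % (2 : ℤ) ^ (a * b) - 2 := by
  rcases Nat.lt_or_ge (a * b) 3 with h | h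
  · have h1 : a ≤ a * b := Nat.le_mul_of_pos_right a hb
    have h2 : b ≤ a * b := Nat.le_mul_of_pos_left b ha
    have ha2 : a ≤ 2 := by omega
    have hb2 : b ≤ 2 := by omega
    interval_cases a <;> interval_cases b <;> simp_all <;> norm_num
  · exact main_gcd_lemma a b ha hb h
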